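/- Let R = B[x^{±1}; σ] be a skew Laurent polynomial ring and I a right ideal of R. If R/I is finitely generated as a right B-module, then I contains an element that is unitary with respect to x (i.e., with both terminal coefficients units in B). -/

import Mathlib

/-- Let `R = B[x^{±1}; σ]` be a skew Laurent polynomial ring over a
noetherian domain `B` (modelled as: `x` is a unit of `R`, conjugation by `x` preserves
`B`, and the powers `xⁱ`, `i ∈ ℤ`, form a basis of `R` as a left `B`-module), and let
`I` be a right ideal of `R`. If `R/I` is finitely generated as a right `B`-module,
then `I` contains an element `α = Σ_{i=p}^q βᵢ xⁱ` that is unitary with respect to `x`,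
i.e. with both terminal coefficients `β_p, β_q` units of `B`. -/
theorem skewLaurent_fg_quotient_has_unitary {R : Type*} [Ring R] (B : Subring R)
    [IsDomain B] (hnoeth : IsNoetherianRing B) (x : Rˣ)
    (hconj : ∀ b : B, (x : R) * (b : R) * ((x⁻¹ : Rˣ) : R) ∈ B ∧
      ((x⁻¹ : Rˣ) : R) * (b : R) * (x : R) ∈ B)
    (hbasis : Function.Bijective
      (fun f : ℤ →₀ B => f.sum fun i b => (b : R) * ((x ^ i : Rˣ) : R)))
    (I : Submodule Rᵐᵒᵖ R)
    (hfg : ∃ (n : ℕ) (g : Fin n → R), ∀ r : R, ∃ c : Fin n → B,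
      r - ∑ i, g i * (c i : R) ∈ I) :
    ∃ α ∈ I, ∃ p q : ℤ, p ≤ q ∧ ∃ β : ℤ → B,
      α = ∑ i ∈ Finset.Icc p q, (β i : R) * ((x ^ i : Rˣ) : R) ∧
      IsUnit (β p) ∧ IsUnit (β q) := by
  obtain ⟨n, g, hg⟩ := hfg
  -- conjugation by arbitrary powers of x preserves B
  have hσ : ∀ (j : ℤ) (b : B), ∃ b' : B,
      ((x ^ j : Rˣ) : R) * (b : R) = (b' : R) * ((x ^ j : Rˣ) : R) := by
    intro j
    induction j using Int.induction_on with
    | zero => intro b; exact ⟨b, by simp⟩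
    | succ k ih =>
      intro b
      obtain ⟨b', hb'⟩ := ih b
      refine ⟨⟨(x : R) * (b' : R) * ((x⁻¹ : Rˣ) : R), (hconj b').1⟩, ?_⟩
      have hx : ((x ^ ((k : ℤ) + 1) : Rˣ) : R) = (x : R) * ((x ^ (k : ℤ) : Rˣ) : R) := by
        rw [show ((k : ℤ) + 1) = 1 + (k : ℤ) by ring, zpow_add, zpow_one, Units.val_mul]
      rw [hx, mul_assoc, hb', ← mul_assoc]
      have h2 : (x : R) * (b' : R)
          = ((x : R) * (b' : R) * ((x⁻¹ : Rˣ) : R)) * (x : R) := by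
        rw [mul_assoc, Units.inv_mul, mul_one]
      conv_lhs => rw [h2]
      rw [mul_assoc]
    | pred k ih =>
      intro b
      obtain ⟨b', hb'⟩ := ih b
      refine ⟨⟨((x⁻¹ : Rˣ) : R) * (b' : R) * (x : R), (hconj b').2⟩, ?_⟩
      have hx : ((x ^ (-(k : ℤ) - 1) : Rˣ) : R)
          = ((x⁻¹ : Rˣ) : R) * ((x ^ (-(k : ℤ)) : Rˣ) : R) := by
        rw [show (-(k : ℤ) - 1) = (-1) + (-(k : ℤ)) by ring, zpow_add, zpow_neg_one,
          Units.val_mul]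
      rw [hx, mul_assoc, hb', ← mul_assoc]
      have h2 : ((x⁻¹ : Rˣ) : R) * (b' : R)
          = (((x⁻¹ : Rˣ) : R) * (b' : R) * (x : R)) * ((x⁻¹ : Rˣ) : R) := by
        rw [mul_assoc, Units.mul_inv, mul_one]
      conv_lhs => rw [h2]
      rw [mul_assoc]
  choose σf hσf using hσ
  choose f hf using fun i => hbasis.2 (g i)
  set S : Finset ℤ := Finset.univ.biUnion (fun i => (f i).support) with hS
  set N : ℤ := ((S.sup fun j => j.natAbs : ℕ) : ℤ) with hNdef
  have hN0 : 0 ≤ N := Int.natCast_nonneg _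
  have hsupp : ∀ i, (f i).support ⊆ Finset.Icc (-N) N := by
    intro i j hj
    have hjS : j ∈ S := Finset.mem_biUnion.mpr ⟨i, Finset.mem_univ i, hj⟩
    have h : j.natAbs ≤ S.sup fun j : ℤ => j.natAbs :=
      Finset.le_sup (f := fun j : ℤ => j.natAbs) hjS
    rw [Finset.mem_Icc, hNdef]
    omega
  -- the key reduction: everything is congruent mod I to a B-combination of xʲ, |j| ≤ N
  have key : ∀ r : R, ∃ β : ℤ → B,
      r - ∑ j ∈ Finset.Icc (-N) N, ((β j : B) : R) * ((x ^ j : Rˣ) : R) ∈ I := by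
    intro r
    obtain ⟨c, hc⟩ := hg r
    refine ⟨fun j => ∑ i, f i j * σf j (c i), ?_⟩
    have hgi : ∀ i, g i * (c i : R)
        = ∑ j ∈ Finset.Icc (-N) N,
            ((f i j * σf j (c i) : B) : R) * ((x ^ j : Rˣ) : R) := by
      intro i
      have hgie : g i = ∑ j ∈ Finset.Icc (-N) N,
          ((f i j : B) : R) * ((x ^ j : Rˣ) : R) := by
        rw [← hf i]
        simp only [Finsupp.sum]
        refine Finset.sum_subset (hsupp i) fun k _ hk => ?_
        rw [Finsupp.notMem_support_iff.mp hk]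
        simp
      rw [hgie, Finset.sum_mul]
      refine Finset.sum_congr rfl fun j _ => ?_
      rw [mul_assoc, hσf j (c i), ← mul_assoc]
      push_cast
      ring
    have hEq : ∑ i, g i * (c i : R)
        = ∑ j ∈ Finset.Icc (-N) N,
            (((∑ i, f i j * σf j (c i) : B)) : R) * ((x ^ j : Rˣ) : R) := by
      rw [Finset.sum_congr rfl fun i _ => hgi i, Finset.sum_comm]
      refine Finset.sum_congr rfl fun j _ => ?_
      rw [← Finset.sum_mul]
      congr 1
      push_cast
      rfl
    rw [← hEq]
    exact hc
  obtain ⟨β1, h1⟩ := key ((x ^ (N + 1) : Rˣ) : R)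
  obtain ⟨β2, h2⟩ := key ((x ^ (-(N + 1)) : Rˣ) : R)
  set βtop : ℤ → B := fun j => if j = N + 1 then 1 else -(β1 j) with hβtop
  set βbot : ℤ → B := fun j => if j = -(N + 1) then 1 else -(β2 j) with hβbot
  set A1 : R := ((x ^ (N + 1) : Rˣ) : R)
    - ∑ j ∈ Finset.Icc (-N) N, ((β1 j : B) : R) * ((x ^ j : Rˣ) : R) with hA1
  set A2 : R := ((x ^ (-(N + 1)) : Rˣ) : R)
    - ∑ j ∈ Finset.Icc (-N) N, ((β2 j : B) : R) * ((x ^ j : Rˣ) : R) with hA2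
  have hα1 : A1 = ∑ j ∈ Finset.Icc (-N) (N + 1), ((βtop j : B) : R) * ((x ^ j : Rˣ) : R) := by
    have hins : Finset.Icc (-N) (N + 1) = insert (N + 1) (Finset.Icc (-N) N) := by
      ext k; simp only [Finset.mem_Icc, Finset.mem_insert]; omega
    rw [hins, Finset.sum_insert (by simp only [Finset.mem_Icc]; omega)]
    have e1 : ((βtop (N + 1) : B) : R) = 1 := by simp [hβtop]
    have e2 : ∀ j ∈ Finset.Icc (-N) N,
        ((βtop j : B) : R) * ((x ^ j : Rˣ) : R)
          = -(((β1 j : B) : R) * ((x ^ j : Rˣ) : R)) := by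
      intro j hj
      have hjne : j ≠ N + 1 := by simp only [Finset.mem_Icc] at hj; omega
      simp only [hβtop, if_neg hjne]
      push_cast
      rw [neg_mul]
    rw [Finset.sum_congr rfl e2, e1, one_mul, Finset.sum_neg_distrib, hA1]
    abel
  have hα2 : A2 = ∑ j ∈ Finset.Icc (-(N + 1)) N, ((βbot j : B) : R) * ((x ^ j : Rˣ) : R) := by
    have hins : Finset.Icc (-(N + 1)) N = insert (-(N + 1)) (Finset.Icc (-N) N) := by
      ext k; simp only [Finset.mem_Icc, Finset.mem_insert]; omega
    rw [hins, Finset.sum_insert (by simp only [Finset.mem_Icc]; omega)]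
    have e1 : ((βbot (-(N + 1)) : B) : R) = 1 := by simp [hβbot]
    have e2 : ∀ j ∈ Finset.Icc (-N) N,
        ((βbot j : B) : R) * ((x ^ j : Rˣ) : R)
          = -(((β2 j : B) : R) * ((x ^ j : Rˣ) : R)) := by
      intro j hj
      have hjne : j ≠ -(N + 1) := by simp only [Finset.mem_Icc] at hj; omega
      simp only [hβbot, if_neg hjne]
      push_cast
      rw [neg_mul]
    rw [Finset.sum_congr rfl e2, e1, one_mul, Finset.sum_neg_distrib, hA2]
    abel
  set X : R := ((x ^ (2 * N + 2) : Rˣ) : R) with hX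
  set βfin : ℤ → B := fun k =>
    (if k ∈ Finset.Icc (-(N + 1)) N then βbot k else 0)
      + (if k ∈ Finset.Icc (N + 2) (3 * N + 3) then βtop (k - (2 * N + 2)) else 0) with hβfin
  refine ⟨A1 * X + A2, ?_, -(N + 1), 3 * N + 3, by omega, βfin, ?_, ?_, ?_⟩
  · refine I.add_mem ?_ h2
    have := I.smul_mem (MulOpposite.op X) h1
    simpa [MulOpposite.smul_eq_mul_unop] using this
  · -- the sum identity
    have hsplit : ∀ k ∈ Finset.Icc (-(N + 1)) (3 * N + 3),
        ((βfin k : B) : R) * ((x ^ k : Rˣ) : R)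
          = (if k ∈ Finset.Icc (-(N + 1)) N
              then ((βbot k : B) : R) * ((x ^ k : Rˣ) : R) else 0)
            + (if k ∈ Finset.Icc (N + 2) (3 * N + 3)
              then ((βtop (k - (2 * N + 2)) : B) : R) * ((x ^ k : Rˣ) : R) else 0) := by
      intro k _
      simp only [hβfin]
      by_cases hk1 : k ∈ Finset.Icc (-(N + 1)) N <;>
        by_cases hk2 : k ∈ Finset.Icc (N + 2) (3 * N + 3)
      · rw [if_pos hk1, if_pos hk2, if_pos hk1, if_pos hk2]
        push_cast
        rw [add_mul]
      · rw [if_pos hk1, if_neg hk2, if_pos hk1, if_neg hk2]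
        push_cast
        rw [add_zero, add_zero]
      · rw [if_neg hk1, if_pos hk2, if_neg hk1, if_pos hk2]
        push_cast
        rw [zero_add, zero_add]
      · rw [if_neg hk1, if_neg hk2, if_neg hk1, if_neg hk2]
        push_cast
        simp
    rw [Finset.sum_congr rfl hsplit, Finset.sum_add_distrib,
      Finset.sum_ite_mem, Finset.sum_ite_mem,
      Finset.inter_eq_right.mpr (Finset.Icc_subset_Icc (le_refl _) (by omega)),
      Finset.inter_eq_right.mpr (Finset.Icc_subset_Icc (by omega) (le_refl _))]
    have hshift : A1 * X
        = ∑ k ∈ Finset.Icc (N + 2) (3 * N + 3),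
            ((βtop (k - (2 * N + 2)) : B) : R) * ((x ^ k : Rˣ) : R) := by
      rw [hα1, Finset.sum_mul]
      have hmap : Finset.Icc (N + 2) (3 * N + 3)
          = (Finset.Icc (-N) (N + 1)).map (addRightEmbedding (2 * N + 2)) := by
        rw [Finset.map_add_right_Icc]
        congr 1 <;> ring
      rw [hmap, Finset.sum_map]
      refine Finset.sum_congr rfl fun j _ => ?_
      simp only [addRightEmbedding_apply, add_sub_cancel_right]
      rw [mul_assoc, hX, ← Units.val_mul, ← zpow_add]
    rw [hshift, hα2]
    exact add_comm _ _
  · -- bottom coefficient is a unit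
    have hp1 : (-(N + 1)) ∈ Finset.Icc (-(N + 1)) N := by
      simp only [Finset.mem_Icc]; omega
    have hp2 : (-(N + 1)) ∉ Finset.Icc (N + 2) (3 * N + 3) := by
      simp only [Finset.mem_Icc]; omega
    have : βfin (-(N + 1)) = 1 := by
      rw [hβfin]
      simp only [if_pos hp1, if_neg hp2, add_zero, hβbot, if_pos rfl]
    rw [this]; exact isUnit_one
  · -- top coefficient is a unit
    have hq1 : (3 * N + 3) ∉ Finset.Icc (-(N + 1)) N := by
      simp only [Finset.mem_Icc]; omega
    have hq2 : (3 * N + 3) ∈ Finset.Icc (N + 2) (3 * N + 3) := by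
      simp only [Finset.mem_Icc]; omega
    have : βfin (3 * N + 3) = 1 := by
      rw [hβfin]
      simp only [if_neg hq1, if_pos hq2, zero_add, hβtop]
      rw [if_pos (by ring)]
    rw [this]; exact isUnit_one
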